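/- Let M = (I_n, −G°) L_z where K_z = L_z L_zᵀ is positive definite with blocks K_x, K_{xy}, K_{yx}, K_y and G° = K_{xy}K_y^{-1}. Then M Mᵀ = K_x − K_{xy} K_y^{-1} K_{yx} = P, and consequently the matrix W_λ = (I_n, −G°)ᵀ(I_n, −G°) − (λ/(1−τ)) K_z^{-1} is negative definite if and only if λ > (1−τ)‖P‖. -/

import Mathlib

open Matrix

noncomputable def matFun {n : ℕ} (A : Matrix (Fin n) (Fin n) ℝ) (f : ℝ → ℝ) :
    Matrix (Fin n) (Fin n) ℝ :=
  if h : A.IsHermitian then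
    (h.eigenvectorUnitary : Matrix (Fin n) (Fin n) ℝ) *
      Matrix.diagonal (fun i => f (h.eigenvalues i)) *
      star (h.eigenvectorUnitary : Matrix (Fin n) (Fin n) ℝ)
  else 0

noncomputable def specNorm {n : ℕ} (A : Matrix (Fin n) (Fin n) ℝ) : ℝ :=
  if h : A.IsHermitian then ⨆ i, h.eigenvalues i else 0


-- Cauchy-Schwarz for dotProduct
lemma dotProduct_sq_le' {m : Type*} [Fintype m] (a b : m → ℝ) :
    (a ⬝ᵥ b) ^ 2 ≤ (a ⬝ᵥ a) * (b ⬝ᵥ b) := by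
  simpa [dotProduct, sq] using Finset.sum_mul_sq_le_sq_mul_sq Finset.univ a b

lemma dotProduct_self_pos' {m : Type*} [Fintype m] {v : m → ℝ} (hv : v ≠ 0) :
    0 < v ⬝ᵥ v := by
  have := Matrix.dotProduct_star_self_pos_iff (v := v) |>.mpr hv
  simpa using this

lemma quad_swap' {m l : Type*} [Fintype m] [Fintype l] (M : Matrix m l ℝ) {c : ℝ} (hc : 0 < c)
    (h : ∀ w : l → ℝ, w ≠ 0 → (M *ᵥ w) ⬝ᵥ (M *ᵥ w) < c * (w ⬝ᵥ w)) :
    ∀ v : m → ℝ, v ≠ 0 → (Mᵀ *ᵥ v) ⬝ᵥ (Mᵀ *ᵥ v) < c * (v ⬝ᵥ v) := by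
  intro v hv
  have hvv : 0 < v ⬝ᵥ v := dotProduct_self_pos' hv
  by_cases hw : Mᵀ *ᵥ v = 0
  · rw [hw]
    simpa using mul_pos hc hvv
  · have h1 := h _ hw
    have hww : 0 < (Mᵀ *ᵥ v) ⬝ᵥ (Mᵀ *ᵥ v) := dotProduct_self_pos' hw
    have hrw : (Mᵀ *ᵥ v) ⬝ᵥ (Mᵀ *ᵥ v) = (M *ᵥ (Mᵀ *ᵥ v)) ⬝ᵥ v := by
      conv_lhs => rw [Matrix.dotProduct_mulVec, Matrix.vecMul_transpose]
    have key : ((Mᵀ *ᵥ v) ⬝ᵥ (Mᵀ *ᵥ v)) ^ 2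
        ≤ ((M *ᵥ (Mᵀ *ᵥ v)) ⬝ᵥ (M *ᵥ (Mᵀ *ᵥ v))) * (v ⬝ᵥ v) := by
      calc ((Mᵀ *ᵥ v) ⬝ᵥ (Mᵀ *ᵥ v)) ^ 2 = ((M *ᵥ (Mᵀ *ᵥ v)) ⬝ᵥ v) ^ 2 := by rw [hrw]
        _ ≤ _ := dotProduct_sq_le' _ _
    nlinarith [mul_lt_mul_of_pos_right h1 hvv]

lemma sub_posdef_iff' {m l : Type*} [Fintype m] [Fintype l] [DecidableEq l]
    (M : Matrix m l ℝ) (c : ℝ) :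
    (c • (1 : Matrix l l ℝ) - Mᵀ * M).PosDef ↔
      ∀ w : l → ℝ, w ≠ 0 → (M *ᵥ w) ⬝ᵥ (M *ᵥ w) < c * (w ⬝ᵥ w) := by
  have hq : ∀ w : l → ℝ,
      star w ⬝ᵥ ((c • (1 : Matrix l l ℝ) - Mᵀ * M) *ᵥ w)
        = c * (w ⬝ᵥ w) - (M *ᵥ w) ⬝ᵥ (M *ᵥ w) := by
    intro w
    have h2 : w ⬝ᵥ ((Mᵀ * M) *ᵥ w) = (M *ᵥ w) ⬝ᵥ (M *ᵥ w) := by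
      rw [← Matrix.mulVec_mulVec, Matrix.dotProduct_mulVec, Matrix.vecMul_transpose]
    rw [star_trivial, Matrix.sub_mulVec, dotProduct_sub, Matrix.smul_mulVec,
      Matrix.one_mulVec, dotProduct_smul, smul_eq_mul, h2]
  constructor
  · intro h w hw
    have := h.dotProduct_mulVec_pos hw
    rw [hq] at this
    linarith
  · intro h
    have h1 : (Mᵀ * M).IsHermitian := by
      have := Matrix.isHermitian_conjTranspose_mul_self M
      rwa [Matrix.conjTranspose_eq_transpose_of_trivial] at this
    refine Matrix.PosDef.of_dotProduct_mulVec_pos ?_ (fun w hw => ?_)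
    · simp [Matrix.IsHermitian, Matrix.conjTranspose_sub, Matrix.conjTranspose_smul, h1.eq]
    · rw [hq]
      have := h w hw
      linarith

lemma posDef_conj_mul' {l : Type*} [Fintype l] [DecidableEq l]
    {A : Matrix l l ℝ} (hA : A.PosDef) {B : Matrix l l ℝ} (hB : IsUnit B) :
    (Bᴴ * A * B).PosDef := by
  refine Matrix.PosDef.of_dotProduct_mulVec_pos (Matrix.isHermitian_conjTranspose_mul_mul B hA.1) (fun x hx => ?_)
  have hinj := Matrix.mulVec_injective_iff_isUnit.mpr hB
  have hx' : B *ᵥ x ≠ 0 := (hinj.ne_iff' (Matrix.mulVec_zero B)).2 hx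
  simpa only [star_mulVec, Matrix.dotProduct_mulVec, Matrix.vecMul_vecMul] using
    hA.dotProduct_mulVec_pos hx'

lemma posDef_conj_iff' {l : Type*} [Fintype l] [DecidableEq l]
    (A : Matrix l l ℝ) {B : Matrix l l ℝ} (hB : IsUnit B) :
    (Bᴴ * A * B).PosDef ↔ A.PosDef := by
  have hBd : IsUnit B.det := (Matrix.isUnit_iff_isUnit_det _).mp hB
  have hBdH : IsUnit (Bᴴ).det := by
    rwa [Matrix.det_conjTranspose, star_trivial]
  constructor
  · intro h
    have h2 := posDef_conj_mul' h (Matrix.isUnit_nonsing_inv_iff.mpr hB)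
    have e : (B⁻¹)ᴴ * (Bᴴ * A * B) * B⁻¹ = A := by
      rw [Matrix.conjTranspose_nonsing_inv, Matrix.mul_assoc (Bᴴ) A B,
        Matrix.nonsing_inv_mul_cancel_left _ _ hBdH, Matrix.mul_assoc,
        Matrix.mul_nonsing_inv _ hBd, Matrix.mul_one]
    rwa [e] at h2
  · intro h
    exact posDef_conj_mul' h hB

lemma shift_posdef_iff' {l : Type*} [Fintype l] [DecidableEq l]
    {B : Matrix l l ℝ} (hB : B.IsHermitian) (c : ℝ) :
    (c • (1 : Matrix l l ℝ) - B).PosDef ↔ ∀ i, hB.eigenvalues i < c := by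
  set U : Matrix l l ℝ := (hB.eigenvectorUnitary : Matrix l l ℝ) with hU
  have hUU : U * star U = 1 := Matrix.mem_unitaryGroup_iff.mp hB.eigenvectorUnitary.2
  have hUU' : star U * U = 1 := Matrix.mem_unitaryGroup_iff'.mp hB.eigenvectorUnitary.2
  have hUnit : IsUnit (star U) := ⟨⟨star U, U, hUU', hUU⟩, rfl⟩
  have key : c • (1 : Matrix l l ℝ) - B
      = U * Matrix.diagonal (fun i => c - hB.eigenvalues i) * star U := by
    have h1 : c • (1 : Matrix l l ℝ) = U * (c • (1 : Matrix l l ℝ)) * star U := by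
      rw [Matrix.mul_smul, Matrix.mul_one, Matrix.smul_mul, hUU]
    conv_lhs => rw [hB.spectral_theorem]; simp only [Unitary.conjStarAlgAut_apply, Unitary.coe_star]; rw [h1]
    rw [← Matrix.sub_mul, ← Matrix.mul_sub]
    congr 1
    rw [RCLike.ofReal_real_eq_id]
    congr 1
    ext i j
    by_cases hij : i = j <;>
      simp [Matrix.diagonal, hij, Matrix.one_apply, Matrix.sub_apply, Matrix.smul_apply]
  have hform : U * Matrix.diagonal (fun i => c - hB.eigenvalues i) * star U
      = (star U)ᴴ * Matrix.diagonal (fun i => c - hB.eigenvalues i) * (star U) := by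
    rw [Matrix.star_eq_conjTranspose, Matrix.conjTranspose_conjTranspose]
  rw [key, hform, posDef_conj_iff' _ hUnit, Matrix.posDef_diagonal_iff]
  simp [sub_pos]

/-- With `M = (I, −G°) L_z`, `K_z = L_z L_zᵀ`, `G° = K_{xy} K_y⁻¹`:
`M Mᵀ = P` (the Schur complement), and
`W_λ = (I, −G°)ᵀ (I, −G°) − (λ/(1−τ)) K_z⁻¹` is negative definite iff
`λ > (1−τ)‖P‖`. -/
theorem W_lambda_negdef_iff {n p : ℕ}
    (Kx : Matrix (Fin n) (Fin n) ℝ) (Kxy : Matrix (Fin n) (Fin p) ℝ)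
    (Kyx : Matrix (Fin p) (Fin n) ℝ) (Ky : Matrix (Fin p) (Fin p) ℝ)
    (hsym : Kyx = Kxyᵀ)
    (hKz : (Matrix.fromBlocks Kx Kxy Kyx Ky).PosDef)
    (Lz : Matrix (Fin n ⊕ Fin p) (Fin n ⊕ Fin p) ℝ)
    (hfac : Matrix.fromBlocks Kx Kxy Kyx Ky = Lz * Lzᵀ)
    (τ lam : ℝ) (hτ0 : 0 ≤ τ) (hτ1 : τ < 1) (hlam : 0 < lam) :
    (Matrix.fromCols (1 : Matrix (Fin n) (Fin n) ℝ) (-(Kxy * Ky⁻¹)) * Lz) *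
        (Matrix.fromCols (1 : Matrix (Fin n) (Fin n) ℝ) (-(Kxy * Ky⁻¹)) * Lz)ᵀ =
      Kx - Kxy * Ky⁻¹ * Kyx ∧
    ((-((Matrix.fromCols (1 : Matrix (Fin n) (Fin n) ℝ) (-(Kxy * Ky⁻¹)))ᵀ *
          Matrix.fromCols (1 : Matrix (Fin n) (Fin n) ℝ) (-(Kxy * Ky⁻¹)) -
        (lam / (1 - τ)) • (Matrix.fromBlocks Kx Kxy Kyx Ky)⁻¹)).PosDef ↔
      (1 - τ) * specNorm (Kx - Kxy * Ky⁻¹ * Kyx) < lam) := by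
  set G : Matrix (Fin n) (Fin p) ℝ := Kxy * Ky⁻¹ with hG
  set A : Matrix (Fin n) (Fin n ⊕ Fin p) ℝ := Matrix.fromCols 1 (-G) with hA
  set Kz := Matrix.fromBlocks Kx Kxy Kyx Ky with hKzdef
  have hKy : Ky.PosDef := by
    refine Matrix.PosDef.of_dotProduct_mulVec_pos ?_ ?_
    · exact (Matrix.isHermitian_fromBlocks_iff.mp hKz.isHermitian).2.2.2
    · intro y hy
      have hz : (Sum.elim (0 : Fin n → ℝ) y) ≠ 0 := by
        intro h
        apply hy
        funext i
        simpa using congrFun h (Sum.inr i)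
      have := hKz.dotProduct_mulVec_pos hz
      simpa [hKzdef, Matrix.fromBlocks_mulVec, sumElim_dotProduct_sumElim] using this
  have hKyd : IsUnit Ky.det := hKy.det_pos.ne'.isUnit
  have part1 : (A * Lz) * (A * Lz)ᵀ = Kx - G * Kyx := by
    have e1 : (A * Lz) * (A * Lz)ᵀ = A * Kz * Aᵀ := by
      rw [Matrix.transpose_mul, hfac]
      simp only [Matrix.mul_assoc]
    rw [e1, hKzdef, hA, Matrix.transpose_fromCols, Matrix.transpose_one,
      Matrix.fromCols_mul_fromBlocks, Matrix.fromCols_mul_fromRows]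
    have hzero : (1 : Matrix (Fin n) (Fin n) ℝ) * Kxy + (-G) * Ky = 0 := by
      rw [Matrix.one_mul, Matrix.neg_mul, hG, Matrix.mul_assoc,
        Matrix.nonsing_inv_mul _ hKyd, Matrix.mul_one]
      simp
    rw [hzero, Matrix.zero_mul, add_zero, Matrix.mul_one, Matrix.one_mul, Matrix.neg_mul,
      ← sub_eq_add_neg]
  have h1τ : 0 < 1 - τ := by linarith
  set c : ℝ := lam / (1 - τ) with hc
  have hc0 : 0 < c := div_pos hlam h1τ
  have hdetLz : IsUnit Lz.det := by
    have h2 : Kz.det = Lz.det * Lz.det := by rw [hfac, Matrix.det_mul, Matrix.det_transpose]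
    have h3 : 0 < Kz.det := hKz.det_pos
    have h4 : Lz.det ≠ 0 := by
      intro h
      rw [h, mul_zero] at h2
      rw [h2] at h3
      exact lt_irrefl _ h3
    exact h4.isUnit
  have hLzU : IsUnit Lz := (Matrix.isUnit_iff_isUnit_det _).mpr hdetLz
  have hdetLzT : IsUnit (Lzᵀ).det := by rwa [Matrix.det_transpose]
  set M := A * Lz with hM
  have e2 : Lzᴴ * (c • Kz⁻¹ - Aᵀ * A) * Lz = c • (1 : Matrix _ _ ℝ) - Mᵀ * M := by
    rw [Matrix.conjTranspose_eq_transpose_of_trivial, Matrix.mul_sub, Matrix.sub_mul]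
    congr 1
    · rw [Matrix.mul_smul, Matrix.smul_mul]
      congr 1
      rw [hfac, Matrix.mul_inv_rev, Matrix.mul_nonsing_inv_cancel_left _ _ hdetLzT,
        Matrix.nonsing_inv_mul _ hdetLz]
    · rw [hM, Matrix.transpose_mul]
      simp only [Matrix.mul_assoc]
  have hP : (Kx - G * Kyx).IsHermitian := by
    rw [← part1]
    have := Matrix.isHermitian_mul_conjTranspose_self M
    rwa [Matrix.conjTranspose_eq_transpose_of_trivial] at this
  refine ⟨part1, ?_⟩
  rw [neg_sub]
  rw [← posDef_conj_iff' (c • Kz⁻¹ - Aᵀ * A) (B := Lz) hLzU, e2, sub_posdef_iff']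
  have quadMt := sub_posdef_iff' Mᵀ c
  rw [Matrix.transpose_transpose] at quadMt
  have swap : (∀ w : (Fin n ⊕ Fin p) → ℝ, w ≠ 0 → (M *ᵥ w) ⬝ᵥ (M *ᵥ w) < c * (w ⬝ᵥ w)) ↔
      (∀ v : Fin n → ℝ, v ≠ 0 → (Mᵀ *ᵥ v) ⬝ᵥ (Mᵀ *ᵥ v) < c * (v ⬝ᵥ v)) := by
    constructor
    · exact quad_swap' M hc0
    · intro h
      have := quad_swap' Mᵀ hc0 h
      rwa [Matrix.transpose_transpose] at this
  rw [swap, ← quadMt, part1, shift_posdef_iff' hP]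
  have hsup : specNorm (Kx - G * Kyx) = ⨆ i, hP.eigenvalues i := by
    rw [specNorm, dif_pos hP]
  have hsup_iff : (⨆ i, hP.eigenvalues i) < c ↔ ∀ i, hP.eigenvalues i < c := by
    rcases isEmpty_or_nonempty (Fin n) with hE | hE
    · exact iff_of_true (by simpa [Real.iSup_of_isEmpty] using hc0) (fun i => isEmptyElim i)
    · obtain ⟨j, hj⟩ := Finite.exists_max (fun i => hP.eigenvalues i)
      have heq : (⨆ i, hP.eigenvalues i) = hP.eigenvalues j :=
        le_antisymm (ciSup_le hj) (le_ciSup (Finite.bddAbove_range _) j)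
      rw [heq]
      exact ⟨fun h i => lt_of_le_of_lt (hj i) h, fun h => h j⟩
  rw [← hsup_iff, ← hsup, hc, lt_div_iff₀ h1τ, mul_comm]
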